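/- Let m ≥ 2 and let Γ be a subgroup of Perm(Fin m) whose commutator subgroup ⁅Γ,Γ⁆ acts transitively on Fin m. Then for every finite complete graph, every m-edge-colouring c of it, and every j ∈ Fin m, the colouring c is Γ-switch equivalent to the constant colouring in which every edge has colour j. Consequently, for any a : Fin m → ℕ with a(i) ≥ 2 for all i, the least n such that every m-edge-colouring of the complete graph on n vertices is Γ-switch equivalent to a colouring containing, for some i, a monochromatic K_{a(i)} of colour i equals min_{i ∈ Fin m} a(i). -/

import Mathlib

open scoped Classical in
/-- Switch the edge-colouring `c` at vertex `v` with permutation `π`: every edge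
incident with `v` has its colour replaced by its image under `π`. -/
noncomputable def switchAt {V K : Type*} (c : Sym2 V → K) (π : Equiv.Perm K) (v : V) :
    Sym2 V → K :=
  fun s => if v ∈ s then π (c s) else c s

/-- Two colourings are `Γ`-switch equivalent if one is obtained from the other by a
finite sequence of switches at vertices with permutations from `Γ`. -/
def SwitchEquiv {V K : Type*} (Γ : Subgroup (Equiv.Perm K)) (c c' : Sym2 V → K) : Prop :=
  Relation.ReflTransGen (fun d d' => ∃ π ∈ Γ, ∃ v : V, d' = switchAt d π v) c c'

/-- The colouring `c` contains a monochromatic complete graph on `t` vertices of colour `i`. -/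
def HasMonoK {V K : Type*} (c : Sym2 V → K) (i : K) (t : ℕ) : Prop :=
  ∃ S : Finset V, S.card = t ∧ ∀ x ∈ S, ∀ y ∈ S, x ≠ y → c s(x, y) = i

open scoped Classical in
/-- Apply a permutation to the colour of a single edge. -/
noncomputable def updEdge {V K : Type*} (c : Sym2 V → K) (e : Sym2 V) (π : Equiv.Perm K) :
    Sym2 V → K :=
  fun s => if s = e then π (c s) else c s

lemma switchAt_switchAt_inv {V K : Type*} (c : Sym2 V → K) (π : Equiv.Perm K) (v : V) :
    switchAt (switchAt c π v) π⁻¹ v = c := by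
  funext s
  simp only [switchAt]
  by_cases h : v ∈ s <;> simp [h]

lemma switchEquiv_symm {V K : Type*} {Γ : Subgroup (Equiv.Perm K)} {c c' : Sym2 V → K}
    (h : SwitchEquiv Γ c c') : SwitchEquiv Γ c' c := by
  have hs : Std.Symm (fun d d' : Sym2 V → K => ∃ π ∈ Γ, ∃ v : V, d' = switchAt d π v) := ⟨by
    rintro d d' ⟨π, hπ, v, rfl⟩
    exact ⟨π⁻¹, inv_mem hπ, v, (switchAt_switchAt_inv d π v).symm⟩⟩
  exact Relation.ReflTransGen.symmetric.symm _ _ h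

lemma switchEquiv_single {V K : Type*} {Γ : Subgroup (Equiv.Perm K)} {π : Equiv.Perm K}
    (hπ : π ∈ Γ) (c : Sym2 V → K) (v : V) : SwitchEquiv Γ c (switchAt c π v) :=
  Relation.ReflTransGen.single ⟨π, hπ, v, rfl⟩

lemma updEdge_one {V K : Type*} (c : Sym2 V → K) (e : Sym2 V) :
    updEdge c e (1 : Equiv.Perm K) = c := by
  funext s; simp only [updEdge]; split <;> simp

lemma updEdge_mul {V K : Type*} (c : Sym2 V → K) (e : Sym2 V) (π σ : Equiv.Perm K) :
    updEdge c e (π * σ) = updEdge (updEdge c e σ) e π := by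
  funext s; simp only [updEdge]; by_cases h : s = e <;> simp [h]

open scoped commutatorElement in
/-- Switching at the two endpoints with `h⁻¹, g⁻¹, h, g` applies exactly the
commutator `⁅g, h⁆` to the single edge `s(u, w)`. -/
lemma four_switches {V K : Type*} (c : Sym2 V → K) (g h : Equiv.Perm K) {u w : V}
    (huw : u ≠ w) :
    switchAt (switchAt (switchAt (switchAt c h⁻¹ w) g⁻¹ u) h w) g u
      = updEdge c s(u, w) ⁅g, h⁆ := by
  funext s
  simp only [switchAt, updEdge, commutatorElement_def]
  by_cases hu : u ∈ s <;> by_cases hw : w ∈ s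
  · have hs : s = s(u, w) := by
      induction s using Sym2.ind with
      | _ x y =>
        rw [Sym2.mem_iff] at hu hw
        rcases hu with rfl | rfl <;> rcases hw with rfl | rfl
        · exact absurd rfl huw
        · rfl
        · exact Sym2.eq_swap
        · exact absurd rfl (Ne.symm huw)
    simp [hu, hw, hs]
  · have hs : s ≠ s(u, w) := fun hh => hw (hh ▸ Sym2.mem_mk_right u w)
    simp [hu, hw, hs]
  · have hs : s ≠ s(u, w) := fun hh => hu (hh ▸ Sym2.mem_mk_left u w)
    simp [hu, hw, hs]
  · have hs : s ≠ s(u, w) := fun hh => hu (hh ▸ Sym2.mem_mk_left u w)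
    simp [hu, hw, hs]

/-- Any element of the commutator subgroup can be applied to a single edge
by a sequence of switches. -/
lemma switchEquiv_updEdge {V K : Type*} {Γ : Subgroup (Equiv.Perm K)} {π : Equiv.Perm K}
    (hπ : π ∈ (⁅Γ, Γ⁆ : Subgroup (Equiv.Perm K))) (c : Sym2 V → K) {u w : V} (huw : u ≠ w) :
    SwitchEquiv Γ c (updEdge c s(u, w) π) := by
  rw [Subgroup.commutator_def] at hπ
  induction hπ using Subgroup.closure_induction generalizing c with
  | mem x hx =>
    obtain ⟨g, hg, h, hh, rfl⟩ := hx
    rw [← four_switches c g h huw]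
    exact (((switchEquiv_single (inv_mem hh) c w).trans
      (switchEquiv_single (inv_mem hg) _ u)).trans
      (switchEquiv_single hh _ w)).trans (switchEquiv_single hg _ u)
  | one => rw [updEdge_one]; exact Relation.ReflTransGen.refl
  | mul x y _ _ ihx ihy =>
    rw [updEdge_mul]
    exact (ihy c).trans (ihx _)
  | inv x _ ihx =>
    have := ihx (updEdge c s(u, w) x⁻¹)
    rw [← updEdge_mul, mul_inv_cancel, updEdge_one] at this
    exact switchEquiv_symm this

/-- If the commutator subgroup `⁅Γ,Γ⁆` acts transitively on the colours, then every
colouring of a finite complete graph is `Γ`-switch equivalent to any constant colouring,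
and the `Γ`-switch Ramsey number `R_Γ(a₁,…,a_m)` equals `min_i a i`. -/
theorem stmt5 (m : ℕ) (hm : 2 ≤ m) (Γ : Subgroup (Equiv.Perm (Fin m)))
    (htrans : ∀ i j : Fin m, ∃ π ∈ (⁅Γ, Γ⁆ : Subgroup (Equiv.Perm (Fin m))), π i = j)
    (a : Fin m → ℕ) (ha : ∀ i, 2 ≤ a i) :
    (∀ (V : Type) [Fintype V] (c : Sym2 V → Fin m) (j : Fin m),
      ∃ c', SwitchEquiv Γ c c' ∧ ∀ x y : V, x ≠ y → c' s(x, y) = j) ∧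
    IsLeast {n : ℕ | ∀ c : Sym2 (Fin n) → Fin m,
      ∃ c', SwitchEquiv Γ c c' ∧ ∃ i : Fin m, HasMonoK c' i (a i)} (⨅ i, a i) := by
  have part1 : ∀ (V : Type) [Fintype V] (c : Sym2 V → Fin m) (j : Fin m),
      ∃ c', SwitchEquiv Γ c c' ∧ ∀ x y : V, x ≠ y → c' s(x, y) = j := by
    intro V _ c j
    classical
    have key : ∀ E : Finset (Sym2 V), ∀ c : Sym2 V → Fin m,
        ∃ c', SwitchEquiv Γ c c' ∧ ∀ e ∈ E, ¬ e.IsDiag → c' e = j := by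
      intro E
      induction E using Finset.induction_on with
      | empty => exact fun c => ⟨c, Relation.ReflTransGen.refl, by simp⟩
      | insert _ _ he _ =>
        rename_i e E ih
        revert he
        induction e using Sym2.ind with
        | _ u w =>
          intro he c
          obtain ⟨c', h1, h2⟩ := ih c
          by_cases hd : (s(u, w) : Sym2 V).IsDiag
          · refine ⟨c', h1, fun e' he' hd' => ?_⟩
            rcases Finset.mem_insert.mp he' with rfl | hE
            · exact absurd hd hd'
            · exact h2 e' hE hd'
          · have huw : u ≠ w := by rwa [Sym2.mk_isDiag_iff] at hd
            obtain ⟨π, hπ, hπj⟩ := htrans (c' s(u, w)) j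
            refine ⟨updEdge c' s(u, w) π, h1.trans (switchEquiv_updEdge hπ c' huw),
              fun e' he' hd' => ?_⟩
            rcases Finset.mem_insert.mp he' with rfl | hE
            · simp only [updEdge, if_pos rfl]; exact hπj
            · have hne : e' ≠ s(u, w) := fun hh => he (hh ▸ hE)
              simp only [updEdge, if_neg hne]
              exact h2 e' hE hd'
    obtain ⟨c', h1, h2⟩ := key Finset.univ c
    refine ⟨c', h1, fun x y hxy => h2 s(x, y) (Finset.mem_univ _) ?_⟩
    simp [Sym2.mk_isDiag_iff, hxy]
  have hne : Nonempty (Fin m) := ⟨⟨0, by omega⟩⟩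
  have hmem : (⨅ i, a i) ∈ Set.range a := by
    rw [iInf]; exact Nat.sInf_mem (Set.range_nonempty a)
  obtain ⟨i₀, hi₀⟩ := hmem
  have hle : ∀ i, (⨅ i, a i) ≤ a i := fun i => ciInf_le (OrderBot.bddBelow _) i
  refine ⟨part1, ?_, ?_⟩
  · intro c
    obtain ⟨c', hcc', hconst⟩ := part1 (Fin (⨅ i, a i)) c i₀
    exact ⟨c', hcc', i₀, Finset.univ,
      by rw [Finset.card_univ, Fintype.card_fin]; exact hi₀.symm,
      fun x _ y _ hxy => hconst x y hxy⟩
  · intro n hn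
    obtain ⟨c', _, i, S, hS, _⟩ := hn (fun _ => i₀)
    have hSn : S.card ≤ n := le_trans (Finset.card_le_univ S) (by simp)
    calc ⨅ i, a i ≤ a i := hle i
      _ = S.card := hS.symm
      _ ≤ n := hSn
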